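/- Set a_n = 10^{n!} for n ≥ 1, and define integer sequences by p₁ = 1, q₁ = a₁, p₂ = a₂, q₂ = a₂·a₁ + 1, and p_n = a_n·p_{n−1} + p_{n−2}, q_n = a_n·q_{n−1} + q_{n−2} for n ≥ 3. Then the sequence p_n/q_n converges to a real number α; α is a Liouville number; and for every real s ≥ 1, α is not an exponential Liouville number of order s, i.e., for every ε > 0 there exists a constant C > 0 such that |q·α − p| ≥ C·e^{−ε·q^{1/s}} for all p ∈ ℤ and all integers q ≥ 1. -/

import Mathlib

private lemma aux_exp_le_rpow (r : ℝ) (hr0 : 0 ≤ r) : Real.exp r ≤ (10:ℝ) ^ r := by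
  rw [Real.rpow_def_of_pos (by norm_num)]
  apply Real.exp_le_exp.mpr
  have hlog10' : 1 ≤ Real.log 10 := by
    rw [Real.le_log_iff_exp_le (by norm_num)]
    have := Real.exp_one_lt_d9
    linarith
  nlinarith

private lemma aux_sq_le_exp (r : ℝ) (hr0 : 0 ≤ r) : r^2/4 ≤ Real.exp r := by
  have ha1 := Real.add_one_le_exp (r/2)
  have hsq2 : Real.exp (r/2) * Real.exp (r/2) = Real.exp r := by
    rw [← Real.exp_add]; ring_nf
  nlinarith [Real.exp_pos (r/2)]

private lemma aux_ineq (s ε nR F : ℝ) (hs : 1 ≤ s) (hε : 0 < ε) (hn3 : 3 ≤ nR)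
    (hK : 432*s*s ≤ (nR-3)*ε) (hf1 : 1 ≤ F) (hfac : nR*(nR-1) ≤ F) :
    27*((nR+1)*F)*(8*s^2) ≤ ε*F^2 := by
  have e1 : 216*s*s*(nR+1) ≤ ε*nR*(nR-1) := by
    nlinarith [mul_le_mul_of_nonneg_right hK (by linarith : (0:ℝ) ≤ nR+1),
      mul_nonneg hε.le (sq_nonneg nR)]
  have e2 : ε*nR*(nR-1) ≤ ε*F := by
    rw [mul_assoc]
    exact mul_le_mul_of_nonneg_left hfac hε.le
  have e3 : 216*s*s*(nR+1) ≤ ε*F := le_trans e1 e2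
  nlinarith [mul_le_mul_of_nonneg_right e3 (le_trans zero_le_one hf1)]

set_option maxHeartbeats 2000000 in
/-- Proposition 6.2: the continued fraction `α = [10^{1!}, 10^{2!}, 10^{3!}, …]` (the
limit of its convergents `p_n/q_n`) is a Liouville number, but for every `s ≥ 1` it is
not an exponential Liouville number of order `s`: for every `ε > 0` there is `C > 0`
with `|qα - p| ≥ C e^{-ε q^{1/s}}` for all `p ∈ ℤ` and all integers `q ≥ 1`. -/
theorem stmt_17 (a p q : ℕ → ℕ)
    (ha : ∀ n, a n = 10 ^ (Nat.factorial n))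
    (hp1 : p 1 = 1) (hq1 : q 1 = a 1)
    (hp2 : p 2 = a 2) (hq2 : q 2 = a 2 * a 1 + 1)
    (hprec : ∀ n, 3 ≤ n → p n = a n * p (n - 1) + p (n - 2))
    (hqrec : ∀ n, 3 ≤ n → q n = a n * q (n - 1) + q (n - 2)) :
    ∃ α : ℝ,
      Filter.Tendsto (fun n : ℕ => (p n : ℝ) / (q n : ℝ)) Filter.atTop (nhds α) ∧
      Liouville α ∧
      ∀ s : ℝ, 1 ≤ s → ∀ ε : ℝ, 0 < ε → ∃ C : ℝ, 0 < C ∧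
        ∀ (pp : ℤ) (qq : ℕ), 1 ≤ qq →
          C * Real.exp (-ε * (qq : ℝ) ^ (1 / s)) ≤ |(qq : ℝ) * α - (pp : ℝ)| := by
  have hq' : ∀ n, 1 ≤ n → q (n+2) = a (n+2) * q (n+1) + q n := by
    intro n hn
    have := hqrec (n+2) (by omega)
    simpa using this
  have hp' : ∀ n, 1 ≤ n → p (n+2) = a (n+2) * p (n+1) + p n := by
    intro n hn
    have := hprec (n+2) (by omega)
    simpa using this
  have ha10 : ∀ n, 10 ≤ a n := by
    intro n
    rw [ha]
    calc 10 = 10^1 := (pow_one 10).symm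
    _ ≤ 10 ^ (Nat.factorial n) := Nat.pow_le_pow_right (by norm_num) (Nat.one_le_iff_ne_zero.mpr (Nat.factorial_ne_zero n))
  -- positivity and growth
  have H : ∀ n, 1 ≤ n → 0 < q n ∧ 10 * q n ≤ q (n+1) := by
    intro n hn
    induction n, hn using Nat.le_induction with
    | base =>
      rw [hq1, hq2, ha, ha]
      norm_num [Nat.factorial]
    | succ n hn ih =>
      obtain ⟨h1, h2⟩ := ih
      constructor
      · omega
      · rw [hq' n hn]
        have := ha10 (n+2)
        nlinarith
  have hgrow : ∀ n, 1 ≤ n → 10^(Nat.factorial (n+1)) * q n ≤ q (n+1) := by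
    intro n hn
    induction n, hn using Nat.le_induction with
    | base =>
      rw [hq1, hq2, ha, ha]
      norm_num [Nat.factorial]
    | succ n hn ih =>
      rw [hq' n hn, ha]
      exact Nat.le_add_right _ _
  have hlow : ∀ n, 1 ≤ n → 10^(Nat.factorial n) ≤ q n := by
    intro n hn
    induction n, hn using Nat.le_induction with
    | base => rw [hq1, ha]
    | succ n hn ih =>
      calc 10^(Nat.factorial (n+1)) = 10^(Nat.factorial (n+1)) * 1 := by ring
      _ ≤ 10^(Nat.factorial (n+1)) * q n := by
          have := (H n hn).1; exact Nat.mul_le_mul_left _ (by omega)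
      _ ≤ q (n+1) := hgrow n hn
  have hup : ∀ n, 1 ≤ n → q n ≤ 10^(2 * Nat.factorial n) ∧ q (n+1) ≤ 10^(2 * Nat.factorial (n+1)) := by
    intro n hn
    induction n, hn using Nat.le_induction with
    | base =>
      rw [hq1, hq2, ha, ha]
      norm_num [Nat.factorial]
    | succ n hn ih =>
      obtain ⟨h1, h2⟩ := ih
      refine ⟨h2, ?_⟩
      show q (n+2) ≤ 10 ^ (2 * Nat.factorial (n+2))
      rw [hq' n hn, ha]
      have hf1 : 1 ≤ Nat.factorial (n+1) := Nat.one_le_iff_ne_zero.mpr (Nat.factorial_ne_zero _)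
      have key : Nat.factorial (n+2) + 2 * Nat.factorial (n+1) + 1 ≤ 2 * Nat.factorial (n+2) := by
        have h3 : Nat.factorial (n+2) = (n+2) * Nat.factorial (n+1) := Nat.factorial_succ _
        nlinarith
      have b1 : 10 ^ Nat.factorial (n + 2) * q (n + 1) ≤ 10 ^ (Nat.factorial (n+2) + 2 * Nat.factorial (n+1)) := by
        rw [pow_add]; exact Nat.mul_le_mul_left _ h2
      have b2 : q n ≤ 10 ^ (Nat.factorial (n+2) + 2 * Nat.factorial (n+1)) := by
        refine le_trans h1 (Nat.pow_le_pow_right (by norm_num) ?_)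
        have h4 := Nat.factorial_le (show n ≤ n+1 by omega)
        have h5 : 1 ≤ Nat.factorial (n+2) := Nat.one_le_iff_ne_zero.mpr (Nat.factorial_ne_zero _)
        omega
      calc 10 ^ Nat.factorial (n + 2) * q (n + 1) + q n
          ≤ 2 * 10 ^ (Nat.factorial (n+2) + 2 * Nat.factorial (n+1)) := by omega
      _ ≤ 10 ^ (Nat.factorial (n+2) + 2 * Nat.factorial (n+1) + 1) := by
            rw [pow_succ]; omega
      _ ≤ 10 ^ (2 * Nat.factorial (n+2)) := Nat.pow_le_pow_right (by norm_num) key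
  -- determinant identity
  have hdet : ∀ n, 1 ≤ n → (p (n+1) : ℤ) * q n - (p n : ℤ) * q (n+1) = (-1)^n := by
    intro n hn
    induction n, hn using Nat.le_induction with
    | base => rw [hp2, hq1, hp1, hq2]; push_cast; ring
    | succ n hn ih =>
      rw [hp' n hn, hq' n hn]
      push_cast
      linear_combination (-1 : ℤ) * ih
  -- real versions
  have hqR : ∀ n, 1 ≤ n → (0:ℝ) < q n := by
    intro n hn; exact_mod_cast (H n hn).1
  set x : ℕ → ℝ := fun n => (p n : ℝ) / (q n : ℝ) with hxdef
  set c : ℕ → ℝ := fun n => 1 / ((q n : ℝ) * (q (n+1) : ℝ)) with hcdef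
  have hcpos : ∀ n, 1 ≤ n → 0 < c n := by
    intro n hn
    have h1 := hqR n hn
    have h2 := hqR (n+1) (by omega)
    rw [hcdef]
    positivity
  have hcmono : ∀ n, 1 ≤ n → c (n+1) ≤ c n := by
    intro n hn
    have h1 := hqR n hn
    have h2 := hqR (n+1) (by omega)
    have h3 := hqR (n+2) (by omega)
    have m1 : (q n : ℝ) ≤ q (n+1) := by
      have := (H n hn).2; exact_mod_cast le_trans (by omega : q n ≤ 10 * q n) (by exact_mod_cast this)
    have m2 : (q (n+1) : ℝ) ≤ q (n+2) := by
      have := (H (n+1) (by omega)).2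
      exact_mod_cast le_trans (by omega : q (n+1) ≤ 10 * q (n+1)) (by exact_mod_cast this)
    rw [hcdef]
    apply one_div_le_one_div_of_le (by positivity)
    exact mul_le_mul m1 m2 h2.le (by positivity)
  have hhalf : ∀ n, 1 ≤ n → c (n+1) ≤ c n / 2 := by
    intro n hn
    have h1 := hqR n hn
    have h2 := hqR (n+1) (by omega)
    have h3 := hqR (n+2) (by omega)
    have m2 : (2:ℝ) * q n ≤ q (n+2) := by
      have g1 := (H n hn).2
      have g2 : 10 * q (n+1) ≤ q (n+2) := (H (n+1) (by omega)).2
      have : 2 * q n ≤ q (n+2) := by omega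
      exact_mod_cast this
    simp only [hcdef]
    have key : 2*((q n:ℝ) * q (n+1)) ≤ (q (n+1):ℝ) * q (n+2) := by nlinarith
    calc (1:ℝ) / ((q (n+1):ℝ) * q (n+1+1)) ≤ 1 / (2*((q n:ℝ) * q (n+1))) := by
          apply one_div_le_one_div_of_le (by positivity)
          exact key
    _ = 1 / ((q n:ℝ) * q (n+1)) / 2 := by ring
  have hxdiff : ∀ n, 1 ≤ n → x (n+1) - x n = (-1)^n * c n := by
    intro n hn
    have h1 := (hqR n hn).ne'
    have h2 := (hqR (n+1) (by omega)).ne'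
    have key : ((p (n+1) : ℝ)) * q n - (p n : ℝ) * q (n+1) = (-1)^n := by
      exact_mod_cast hdet n hn
    rw [hxdef, hcdef]
    field_simp
    linear_combination key
  -- alternating structure
  have hsq : ∀ n : ℕ, ((-1:ℝ))^n * (-1)^n = 1 := by
    intro n
    rw [← pow_add]
    exact Even.neg_one_pow ⟨n, rfl⟩
  have hstep : ∀ d n, 1 ≤ n → (-1:ℝ)^n * (x (d+1+n) - x n) =
      c n - (-1)^(n+1) * (x (d+(n+1)) - x (n+1)) := by
    intro d n hn
    have hd := hxdiff n hn
    have e : d + 1 + n = d + (n+1) := by omega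
    rw [e]
    calc (-1:ℝ)^n * (x (d+(n+1)) - x n)
        = (-1)^n * (x (d+(n+1)) - x (n+1)) + (-1)^n * (x (n+1) - x n) := by ring
    _ = (-1)^n * (x (d+(n+1)) - x (n+1)) + c n := by
        rw [hd, ← mul_assoc, hsq, one_mul]
    _ = c n - (-1)^(n+1) * (x (d+(n+1)) - x (n+1)) := by
        rw [pow_succ]; ring
  have K : ∀ d n, 1 ≤ n → 0 ≤ (-1:ℝ)^n * (x (d+n) - x n) ∧ (-1:ℝ)^n * (x (d+n) - x n) ≤ c n := by
    intro d
    induction d with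
    | zero =>
      intro n hn
      simp only [Nat.zero_add, sub_self, mul_zero]
      exact ⟨le_refl 0, (hcpos n hn).le⟩
    | succ d ih =>
      intro n hn
      have h1 := ih (n+1) (by omega)
      have h2 := hcmono n hn
      have h3 := hstep d n hn
      constructor
      · rw [h3]; linarith [h1.2]
      · rw [h3]; linarith [h1.1]
  -- limit
  have hdist : ∀ k : ℕ, dist (x (k+1)) (x (k+1+1)) ≤ 1 * (1/2)^k := by
    intro k
    have h1 := hxdiff (k+1) (by omega)
    rw [Real.dist_eq, one_mul]
    have : |x (k+1) - x (k+1+1)| = c (k+1) := by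
      rw [abs_sub_comm, h1, abs_mul, abs_pow, abs_neg, abs_one, one_pow, one_mul,
        abs_of_pos (hcpos (k+1) (by omega))]
    rw [this]
    have hql : 10 ^ Nat.factorial (k+2) ≤ q (k+2) := hlow (k+2) (by omega)
    have hq1 : 1 ≤ q (k+1) := (H (k+1) (by omega)).1
    have h2k : (2:ℕ)^k ≤ q (k+1) * q (k+2) := by
      calc (2:ℕ)^k ≤ 2^(Nat.factorial (k+2)) := Nat.pow_le_pow_right (by norm_num)
            (le_trans (by omega) (Nat.self_le_factorial (k+2)))
      _ ≤ 10^(Nat.factorial (k+2)) := Nat.pow_le_pow_left (by norm_num) _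
      _ ≤ q (k+2) := hql
      _ ≤ q (k+1) * q (k+2) := Nat.le_mul_of_pos_left _ (by omega)
    have h2kR : (2:ℝ)^k ≤ (q (k+1) : ℝ) * q (k+2) := by exact_mod_cast h2k
    simp only [hcdef]
    rw [div_pow, one_pow, one_div, one_div]
    apply inv_anti₀ (by positivity)
    exact h2kR
  have hcauchy : CauchySeq (fun k : ℕ => x (k+1)) := cauchySeq_of_le_geometric (1/2) 1 (by norm_num) hdist
  obtain ⟨α, hα⟩ := cauchySeq_tendsto_of_complete hcauchy
  have htend : Filter.Tendsto x Filter.atTop (nhds α) := (Filter.tendsto_add_atTop_iff_nat 1).mp hα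
  -- bounds on α
  have halpha : ∀ n, 1 ≤ n → c n - c (n+1) ≤ (-1:ℝ)^n * (α - x n) ∧ (-1:ℝ)^n * (α - x n) ≤ c n := by
    intro n hn
    have hshift : Filter.Tendsto (fun d => x (d + n)) Filter.atTop (nhds α) :=
      (Filter.tendsto_add_atTop_iff_nat n).mpr htend
    have hT : Filter.Tendsto (fun d => (-1:ℝ)^n * (x (d+n) - x n)) Filter.atTop
        (nhds ((-1:ℝ)^n * (α - x n))) := by
      exact ((hshift.sub_const (x n)).const_mul _)
    constructor
    · apply ge_of_tendsto hT
      filter_upwards [Filter.eventually_ge_atTop 1] with d hd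
      obtain ⟨e, rfl⟩ : ∃ e, d = e + 1 := ⟨d - 1, by omega⟩
      rw [hstep e n hn]
      have := (K e (n+1) (by omega)).2
      linarith
    · apply le_of_tendsto hT
      filter_upwards with d
      exact (K d n hn).2
  have habs : ∀ n, 1 ≤ n → |α - x n| = (-1:ℝ)^n * (α - x n) := by
    intro n hn
    have h1 := (halpha n hn).1
    have h2 := hhalf n hn
    have h3 := hcpos n hn
    calc |α - x n| = |(-1:ℝ)^n * (α - x n)| := by
          rw [abs_mul, abs_pow, abs_neg, abs_one, one_pow, one_mul]
    _ = (-1:ℝ)^n * (α - x n) := abs_of_nonneg (by linarith)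
  have habs_up : ∀ n, 1 ≤ n → |α - x n| ≤ c n := by
    intro n hn; rw [habs n hn]; exact (halpha n hn).2
  have habs_lo : ∀ n, 1 ≤ n → c n / 2 ≤ |α - x n| := by
    intro n hn
    rw [habs n hn]
    have h1 := (halpha n hn).1
    have h2 := hhalf n hn
    linarith
  -- Liouville
  have hq10 : ∀ n, 1 ≤ n → 10 ≤ q n := by
    intro n hn
    refine le_trans ?_ (hlow n hn)
    calc 10 = 10^1 := (pow_one 10).symm
    _ ≤ 10 ^ (Nat.factorial n) := Nat.pow_le_pow_right (by norm_num)
        (Nat.one_le_iff_ne_zero.mpr (Nat.factorial_ne_zero n))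
  have hexp : ∀ (k nn : ℕ), 2 * k < nn + 1 → 2 * Nat.factorial nn * k < Nat.factorial (nn+1) := by
    intro k nn hk
    rw [Nat.factorial_succ]
    have hf : 1 ≤ Nat.factorial nn := Nat.one_le_iff_ne_zero.mpr (Nat.factorial_ne_zero nn)
    nlinarith
  have hLiou : Liouville α := by
    intro m
    set n := 2*m+2 with hndef
    have hn1 : 1 ≤ n := by omega
    have hxcast : ((p n : ℤ) : ℝ) / ((q n : ℤ) : ℝ) = x n := by
      simp only [hxdef]; push_cast; ring
    have hc := hcpos n hn1
    refine ⟨p n, q n, ?_, ?_, ?_⟩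
    · have := hq10 n hn1
      exact_mod_cast by omega
    · rw [hxcast]
      intro hcontr
      have hlo := habs_lo n hn1
      rw [hcontr, sub_self, abs_zero] at hlo
      linarith
    · rw [hxcast]
      have hnat : q n ^ m < q n * q (n+1) := by
        rcases Nat.eq_zero_or_pos m with hm | hm
        · subst hm
          simp only [pow_zero]
          have h1 := hq10 n hn1
          have h2 := (H n hn1).1
          have h3 := (H (n+1) (by omega)).1
          calc 1 < q n := by omega
          _ ≤ q n * q (n+1) := Nat.le_mul_of_pos_right _ h3
        · obtain ⟨k, rfl⟩ : ∃ k, m = k + 1 := ⟨m - 1, by omega⟩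
          rw [pow_succ, mul_comm (q n ^ k) (q n)]
          refine mul_lt_mul_of_pos_left ?_ (H n hn1).1
          calc q n ^ k ≤ (10 ^ (2 * Nat.factorial n)) ^ k :=
                Nat.pow_le_pow_left (hup n hn1).1 k
          _ = 10 ^ (2 * Nat.factorial n * k) := by rw [← pow_mul]
          _ < 10 ^ (Nat.factorial (n+1)) := by
              apply Nat.pow_lt_pow_right (by norm_num)
              exact hexp k n (by omega)
          _ ≤ q (n+1) := hlow (n+1) (by omega)
      have hnatR : ((q n : ℝ)) ^ m < (q n : ℝ) * q (n+1) := by exact_mod_cast hnat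
      have hq1 := hqR n hn1
      have hq2 := hqR (n+1) (by omega)
      calc |α - x n| ≤ c n := habs_up n hn1
      _ < 1 / ((q n : ℝ))^m := by
          simp only [hcdef]
          apply one_div_lt_one_div_of_lt (by positivity) hnatR
      _ = 1 / ((q n : ℤ) : ℝ)^m := by push_cast; ring
  -- coprimality
  have hcop : ∀ n, 1 ≤ n → IsCoprime ((q n : ℤ)) ((p n : ℤ)) := by
    intro n hn
    have hd := hdet n hn
    rcases Nat.even_or_odd n with he | ho
    · rw [he.neg_one_pow] at hd
      exact ⟨(p (n+1) : ℤ), -(q (n+1) : ℤ), by linear_combination hd⟩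
    · rw [ho.neg_one_pow] at hd
      exact ⟨-(p (n+1) : ℤ), (q (n+1) : ℤ), by linear_combination -hd⟩
  -- core estimate
  have hcore : ∀ n, 1 ≤ n → ∀ pp : ℤ, ∀ qq : ℕ, 1 ≤ qq → 2 * qq ≤ q (n+1) →
      1 / (2 * (q (n+1) : ℝ)) ≤ |(qq : ℝ) * α - (pp : ℝ)| := by
    intro n hn pp qq hqq hle
    have hq1 := hqR n hn
    have hq2 := hqR (n+1) (by omega)
    have hqqR : (0:ℝ) < qq := by exact_mod_cast hqq
    have hleR : 2 * (qq:ℝ) ≤ q (n+1) := by exact_mod_cast hle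
    have hxn : x n = (p n : ℝ) / q n := by rw [hxdef]
    have hcn : c n = 1 / ((q n : ℝ) * q (n+1)) := by rw [hcdef]
    rcases eq_or_ne ((qq : ℤ) * p n - pp * q n) 0 with hA | hA
    · -- pp/qq = p n/q n
      have hdvd : (q n : ℤ) ∣ (qq : ℤ) := by
        apply (hcop n hn).dvd_of_dvd_mul_right
        exact ⟨pp, by linarith [hA]⟩
      have hqle : (q n : ℤ) ≤ (qq : ℤ) := Int.le_of_dvd (by exact_mod_cast hqq) hdvd
      have hqleR : (q n : ℝ) ≤ qq := by exact_mod_cast hqle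
      have hppx : (pp : ℝ) = qq * x n := by
        have hAR : (qq : ℝ) * p n - pp * q n = 0 := by exact_mod_cast hA
        rw [hxn]
        field_simp
        linarith
      have heq : |(qq : ℝ) * α - pp| = qq * |α - x n| := by
        rw [hppx, ← mul_sub, abs_mul, abs_of_pos hqqR]
      rw [heq]
      calc 1 / (2 * (q (n+1) : ℝ)) = (q n : ℝ) * (c n / 2) := by
            rw [hcn]; field_simp
      _ ≤ (qq : ℝ) * (c n / 2) := by
            apply mul_le_mul_of_nonneg_right hqleR (by linarith [hcpos n hn])
      _ ≤ (qq : ℝ) * |α - x n| := by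
            apply mul_le_mul_of_nonneg_left (habs_lo n hn) (le_of_lt hqqR)
    · -- nonzero determinant
      have hA1 : (1:ℤ) ≤ |(qq : ℤ) * p n - pp * q n| := Int.one_le_abs hA
      have hA1R : (1:ℝ) ≤ |(qq : ℝ) * p n - pp * q n| := by exact_mod_cast hA1
      have hu : 1 / (q n : ℝ) ≤ |(qq : ℝ) * x n - pp| := by
        have heq2 : (qq : ℝ) * x n - pp = ((qq : ℝ) * p n - pp * q n) / q n := by
          rw [hxn]; field_simp
        rw [heq2, abs_div, abs_of_pos hq1]
        gcongr
      have hv : (qq : ℝ) * |α - x n| ≤ 1 / (2 * q n) := by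
        calc (qq : ℝ) * |α - x n| ≤ qq * c n := by
              apply mul_le_mul_of_nonneg_left (habs_up n hn) (le_of_lt hqqR)
        _ ≤ (q (n+1) / 2) * c n := by
              apply mul_le_mul_of_nonneg_right (by linarith) (le_of_lt (hcpos n hn))
        _ = 1 / (2 * q n) := by rw [hcn]; field_simp
      have htri : |(qq : ℝ) * x n - pp| ≤ |(qq : ℝ) * α - pp| + (qq : ℝ) * |α - x n| := by
        have h1 : (qq : ℝ) * x n - pp = ((qq : ℝ) * α - pp) + (-(qq * (α - x n))) := by ring
        rw [h1]
        refine (abs_add_le _ _).trans ?_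
        rw [abs_neg, abs_mul, abs_of_pos hqqR]
      have hqmonoR : (q n : ℝ) ≤ q (n+1) := by
        have := (H n hn).2
        have : q n ≤ q (n+1) := by omega
        exact_mod_cast this
      have hfin : 1 / (2 * (q (n+1) : ℝ)) ≤ 1 / (2 * (q n : ℝ)) := by
        apply one_div_le_one_div_of_le (by positivity) (by linarith)
      have : 1 / (q n : ℝ) - 1 / (2 * q n) ≤ |(qq : ℝ) * α - pp| := by linarith
      calc 1 / (2 * (q (n+1) : ℝ)) ≤ 1 / (2 * (q n : ℝ)) := hfin
      _ = 1 / (q n : ℝ) - 1 / (2 * q n) := by field_simp; ring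
      _ ≤ |(qq : ℝ) * α - pp| := this
  -- part 3
  have hfacmul : ∀ n : ℕ, 1 ≤ n → n * (n-1) ≤ Nat.factorial n := by
    intro n hn
    obtain ⟨m, rfl⟩ : ∃ m, n = m+1 := ⟨n-1, by omega⟩
    rw [Nat.factorial_succ]
    have h1 : m + 1 - 1 = m := by omega
    rw [h1]
    exact Nat.mul_le_mul_left _ (Nat.self_le_factorial m)
  have hpart3 : ∀ s : ℝ, 1 ≤ s → ∀ ε : ℝ, 0 < ε → ∃ C : ℝ, 0 < C ∧
      ∀ (pp : ℤ) (qq : ℕ), 1 ≤ qq →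
        C * Real.exp (-ε * (qq : ℝ) ^ (1 / s)) ≤ |(qq : ℝ) * α - (pp : ℝ)| := by
    intro s hs ε hε
    have hs0 : (0:ℝ) < s := lt_of_lt_of_le one_pos hs
    have hinv : (0:ℝ) < 1/s := by positivity
    have hinv1 : 1/s ≤ 1 := by rw [div_le_one hs0]; exact hs
    obtain ⟨N, hN⟩ := exists_nat_ge (432 * s * s / ε + 3)
    have hN3 : 3 ≤ N := by
      have h0 : (0:ℝ) ≤ 432 * s * s / ε := by positivity
      have : (3:ℝ) ≤ N := by linarith
      exact_mod_cast this
    have hNcond : ∀ n, N ≤ n → Real.log (2 * (q (n+1) : ℝ)) ≤ ε/2 * ((q n : ℝ)) ^ (1/s) := by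
      intro n hn
      have hn3 : 3 ≤ n := le_trans hN3 hn
      have hq1 := hqR n (by omega)
      have hq2 := hqR (n+1) (by omega)
      have hL1 : Real.log (2 * (q (n+1):ℝ)) ≤ 27 * (Nat.factorial (n+1) : ℝ) := by
        have hb : (2 * q (n+1) : ℕ) ≤ 10 ^ (2 * Nat.factorial (n+1) + 1) := by
          have h2 := (hup n (by omega)).2
          calc 2 * q (n+1) ≤ 2 * 10^(2*Nat.factorial (n+1)) := by omega
          _ ≤ 10 ^ (2*Nat.factorial (n+1) + 1) := by rw [pow_succ]; omega
        have hbR : (2 : ℝ) * q (n+1) ≤ (10:ℝ) ^ (2 * Nat.factorial (n+1) + 1) := by exact_mod_cast hb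
        have hlog10 : Real.log 10 ≤ 9 := by
          have := Real.log_le_sub_one_of_pos (show (0:ℝ) < 10 by norm_num)
          linarith
        have hf1 : 1 ≤ Nat.factorial (n+1) := Nat.one_le_iff_ne_zero.mpr (Nat.factorial_ne_zero _)
        calc Real.log (2 * (q (n+1):ℝ)) ≤ Real.log ((10:ℝ) ^ (2*Nat.factorial (n+1) + 1)) :=
              Real.log_le_log (by positivity) hbR
        _ = ((2*Nat.factorial (n+1) + 1 : ℕ) : ℝ) * Real.log 10 := by
              rw [Real.log_pow]
        _ ≤ ((3 * Nat.factorial (n+1) : ℕ) : ℝ) * 9 := by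
              apply mul_le_mul _ hlog10 (Real.log_nonneg (by norm_num)) (by positivity)
              exact_mod_cast (by omega : 2*Nat.factorial (n+1)+1 ≤ 3*Nat.factorial (n+1))
        _ = 27 * (Nat.factorial (n+1) : ℝ) := by push_cast; ring
      have hL2 : ((Nat.factorial n : ℝ)/s)^2/4 ≤ ((q n : ℝ)) ^ (1/s) := by
        have h1 : ((10:ℝ) ^ (Nat.factorial n : ℕ)) ≤ (q n : ℝ) := by
          exact_mod_cast hlow n (by omega)
        have h2 : (((10:ℝ) ^ (Nat.factorial n : ℕ)) : ℝ) ^ (1/s) ≤ ((q n : ℝ)) ^ (1/s) :=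
          Real.rpow_le_rpow (by positivity) h1 (le_of_lt hinv)
        have h3 : (((10:ℝ) ^ (Nat.factorial n : ℕ)) : ℝ) ^ (1/s)
            = (10:ℝ) ^ ((Nat.factorial n : ℝ) * (1/s)) := by
          rw [← Real.rpow_natCast 10 (Nat.factorial n), ← Real.rpow_mul (by norm_num)]
        set r : ℝ := (Nat.factorial n : ℝ) * (1/s) with hrdef
        have hr0 : (0:ℝ) ≤ r := by positivity
        have h4 : Real.exp r ≤ (10:ℝ) ^ r := aux_exp_le_rpow r hr0
        have h5 : r^2/4 ≤ Real.exp r := aux_sq_le_exp r hr0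
        have hre : ((Nat.factorial n : ℝ)/s)^2/4 = r^2/4 := by rw [hrdef]; ring_nf
        rw [hre]
        rw [h3] at h2
        exact le_trans (le_trans h5 h4) h2
      have hL3 : 27 * (Nat.factorial (n+1) : ℝ) ≤ ε/2 * (((Nat.factorial n : ℝ)/s)^2/4) := by
        have hfs : ((Nat.factorial (n+1) : ℕ) : ℝ) = ((n:ℝ)+1) * (Nat.factorial n : ℝ) := by
          rw [Nat.factorial_succ]; push_cast; ring
        have hfacR : ((n:ℝ)) * ((n:ℝ) - 1) ≤ (Nat.factorial n : ℝ) := by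
          have h' : ((n*(n-1):ℕ):ℝ) ≤ (Nat.factorial n : ℝ) := Nat.cast_le.mpr (hfacmul n (by omega))
          push_cast [Nat.cast_sub (show 1 ≤ n by omega)] at h'
          linarith
        have hn3R : (3:ℝ) ≤ (n:ℝ) := by exact_mod_cast hn3
        have hNn : 432 * s * s / ε + 3 ≤ (n:ℝ) := le_trans hN (by exact_mod_cast hn)
        have hK : 432 * s * s ≤ ((n:ℝ) - 3) * ε := by
          rw [← div_le_iff₀ hε]
          linarith
        have hf1 : (1:ℝ) ≤ (Nat.factorial n : ℝ) := by
          exact_mod_cast Nat.one_le_iff_ne_zero.mpr (Nat.factorial_ne_zero n)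
        rw [hfs, div_pow]
        rw [show ε/2 * ((Nat.factorial n:ℝ)^2/s^2/4) = ε * (Nat.factorial n:ℝ)^2/(8*s^2) by ring]
        rw [le_div_iff₀ (by positivity)]
        have := aux_ineq s ε (n:ℝ) (Nat.factorial n : ℝ) hs hε hn3R hK hf1 hfacR
        nlinarith [this]
      calc Real.log (2 * (q (n+1):ℝ)) ≤ 27 * (Nat.factorial (n+1) : ℝ) := hL1
      _ ≤ ε/2 * (((Nat.factorial n : ℝ)/s)^2/4) := hL3
      _ ≤ ε/2 * ((q n : ℝ)) ^ (1/s) := mul_le_mul_of_nonneg_left hL2 (by linarith)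
    have hqN1 := hqR (N+1) (by omega)
    refine ⟨1 / (2 * (q (N+1) : ℝ)), by positivity, ?_⟩
    intro pp qq hqq
    have hex : ∃ n, N ≤ n ∧ 2*qq ≤ q (n+1) := by
      refine ⟨max N (2*qq), le_max_left _ _, ?_⟩
      have t1 : max N (2*qq) + 1 ≤ Nat.factorial (max N (2*qq) + 1) := Nat.self_le_factorial _
      have t2 : Nat.factorial (max N (2*qq) + 1) < 10 ^ (Nat.factorial (max N (2*qq) + 1)) :=
        Nat.lt_pow_self (by norm_num : 1 < 10)
      have t3 := hlow (max N (2*qq) + 1) (by omega)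
      have t4 : 2*qq ≤ max N (2*qq) := le_max_right _ _
      omega
    classical
    set n := Nat.find hex with hndef
    obtain ⟨hnN, hnle⟩ : N ≤ n ∧ 2*qq ≤ q (n+1) := Nat.find_spec hex
    have hn1 : 1 ≤ n := by omega
    have hbound := hcore n hn1 pp qq hqq hnle
    have hq2' := hqR (n+1) (by omega)
    have hC1 : 1 / (2*(q (N+1):ℝ)) ≤ 1 := by
      rw [div_le_one (by positivity)]
      have h10' : (10:ℝ) ≤ (q (N+1):ℝ) := by exact_mod_cast hq10 (N+1) (by omega)
      linarith
    have hrpnn : (0:ℝ) ≤ (qq:ℝ)^(1/s) := Real.rpow_nonneg (by positivity) _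
    have hexp_nonpos : -ε * (qq:ℝ)^(1/s) ≤ 0 := by
      have := mul_nonneg hε.le hrpnn
      linarith
    rcases eq_or_lt_of_le hnN with heq | hlt
    · have hexp1 : Real.exp (-ε * (qq:ℝ)^(1/s)) ≤ 1 :=
        Real.exp_le_one_iff.mpr hexp_nonpos
      calc 1 / (2 * (q (N+1) : ℝ)) * Real.exp (-ε * (qq : ℝ) ^ (1 / s))
          ≤ 1 / (2 * (q (N+1) : ℝ)) * 1 := by
            apply mul_le_mul_of_nonneg_left hexp1 (by positivity)
      _ = 1 / (2 * (q (n+1) : ℝ)) := by rw [mul_one, ← heq]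
      _ ≤ |(qq : ℝ) * α - (pp : ℝ)| := hbound
    · have hmin := Nat.find_min hex (show n - 1 < n by omega)
      push_neg at hmin
      have hqlt : q n < 2*qq := by
        have e : n - 1 + 1 = n := by omega
        have := hmin (by omega)
        rw [e] at this
        exact this
      have hqltR : (q n : ℝ) < 2*qq := by exact_mod_cast hqlt
      have h1 : (q n : ℝ)/2 ≤ (qq:ℝ) := by linarith
      have hqnn : (0:ℝ) ≤ (q n : ℝ) := by positivity
      have h2 : ((q n : ℝ)/2) ^ (1/s) ≤ (qq:ℝ)^(1/s) :=
        Real.rpow_le_rpow (by positivity) h1 hinv.le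
      have h2s : (2:ℝ)^((1:ℝ)/s) ≤ 2 := by
        calc (2:ℝ)^((1:ℝ)/s) ≤ (2:ℝ)^(1:ℝ) :=
              Real.rpow_le_rpow_of_exponent_le (by norm_num) hinv1
        _ = 2 := Real.rpow_one 2
      have h3 : ((q n:ℝ))^(1/s)/2 ≤ ((q n:ℝ)/2)^(1/s) := by
        rw [Real.div_rpow hqnn (by norm_num : (0:ℝ) ≤ 2)]
        gcongr
      have h4 := hNcond n hnN
      have h6 : ε * ((q n:ℝ)^(1/s)/2) ≤ ε * (qq:ℝ)^(1/s) :=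
        mul_le_mul_of_nonneg_left (le_trans h3 h2) hε.le
      have h5 : Real.log (2*(q (n+1):ℝ)) ≤ ε * (qq:ℝ)^(1/s) := by
        have : ε/2 * ((q n : ℝ)) ^ (1/s) = ε * ((q n:ℝ)^(1/s)/2) := by ring
        linarith [h4, h6]
      have hpos2 : (0:ℝ) < 2*(q (n+1):ℝ) := by positivity
      have h7 : Real.exp (-ε * (qq:ℝ)^(1/s)) ≤ 1/(2*(q (n+1):ℝ)) := by
        rw [show (1:ℝ)/(2*(q (n+1):ℝ)) = Real.exp (- Real.log (2*(q (n+1):ℝ))) by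
          rw [Real.exp_neg, Real.exp_log hpos2, one_div]]
        exact Real.exp_le_exp.mpr (by linarith)
      calc 1 / (2 * (q (N+1) : ℝ)) * Real.exp (-ε * (qq : ℝ) ^ (1 / s))
          ≤ 1 * Real.exp (-ε * (qq : ℝ) ^ (1 / s)) := by
            apply mul_le_mul_of_nonneg_right hC1 (Real.exp_pos _).le
      _ = Real.exp (-ε * (qq : ℝ) ^ (1 / s)) := one_mul _
      _ ≤ 1/(2*(q (n+1):ℝ)) := h7
      _ ≤ |(qq : ℝ) * α - (pp : ℝ)| := hbound
  exact ⟨α, htend, hLiou, hpart3⟩
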